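/- Every word of the form [n, n-2, n-3, …, j₁] · [n-1, n-2, …, j₂] · [n, n-2, …, j₃] ⋯ with 1 ≤ j₁ < j₂ < ⋯ < j_ℓ ≤ n-1 (a 'suffix' in type Dₙ) is a homogeneous word: whenever the same letter i appears in positions r < s of the word, there exist positions t, u with r < t < u < s such that the letters at positions t and u are both neighbors of i in the Dₙ Dynkin diagram. -/

import Mathlib

/-- Letters `i` and `j` (from `{1, …, n}`) are neighbors in the `Dₙ` Dynkin diagram:
`1 – 2 – ⋯ – (n-2)` is a path, and both `n-1` and `n` are adjacent to `n-2`. -/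
def dnAdj (n i j : ℕ) : Prop :=
  (i + 1 = j ∧ j ≤ n - 1) ∨ (j + 1 = i ∧ i ≤ n - 1) ∨
  (i = n ∧ j = n - 2) ∨ (j = n ∧ i = n - 2)

/-- A word `w` is homogeneous (with respect to a neighbor relation `adj`): whenever the same
letter appears in positions `r < s`, there are positions `t, u` with `r < t < u < s` whose
letters are both neighbors of that letter. -/
def Homog {α : Type*} (adj : α → α → Prop) (w : List α) : Prop :=
  ∀ r s : Fin w.length, (r : ℕ) < s → w.get r = w.get s →
    ∃ t u : Fin w.length, (r : ℕ) < t ∧ (t : ℕ) < u ∧ (u : ℕ) < s ∧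
      adj (w.get r) (w.get t) ∧ adj (w.get r) (w.get u)

/-- The descending word `[a, a-1, …, b]` (empty if `a < b`). -/
def desc (a b : ℕ) : List ℕ := (List.range (a + 1 - b)).map (fun t => a - t)

/-- The suffix word `s_{n,j₁} s_{n-1,j₂} s_{n,j₃} ⋯` of type `Dₙ` determined by the indices
`j₁ < j₂ < ⋯ < j_ℓ`; the boolean records whether the next segment starts with `n` (`true`)
or with `n-1` (`false`). -/
def suffixWord (n : ℕ) : Bool → List ℕ → List ℕ
  | _, [] => []
  | b, j :: js => ((if b then n else n - 1) :: desc (n - 2) j) ++ suffixWord n (!b) js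

/-- Validity of the indices `j₁ < j₂ < ⋯ < j_ℓ` of a suffix: strictly increasing and
contained in `{1, …, n-1}`. -/
def ValidSuffixIdx (n : ℕ) (js : List ℕ) : Prop :=
  js.Chain' (· < ·) ∧ ∀ j ∈ js, 1 ≤ j ∧ j ≤ n - 1

/-- The prefix word `s_{1,i₁} s_{2,i₂} ⋯ s_{n-1,i_{n-1}}` where `s_{k,i} = [k, k-1, …, i]`. -/
def prefixWord (n : ℕ) (i : ℕ → ℕ) : List ℕ :=
  (List.range (n - 1)).flatMap (fun k => desc (k + 1) (i (k + 1)))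

/-- Validity of the indices of a prefix: `1 ≤ i_k ≤ k + 1` for `1 ≤ k ≤ n-1`. -/
def ValidPrefixIdx (n : ℕ) (i : ℕ → ℕ) : Prop :=
  ∀ k, 1 ≤ k → k ≤ n - 1 → 1 ≤ i k ∧ i k ≤ k + 1

/-- The collection labeled by a suffix `suf`: all homogeneous canonical words of type `Dₙ`
with suffix `suf`. -/
def collection (n : ℕ) (suf : List ℕ) : Set (List ℕ) :=
  {w | ∃ i, ValidPrefixIdx n i ∧ w = prefixWord n i ++ suf ∧ Homog (dnAdj n) w}

theorem desc_nil {a b : ℕ} (h : a < b) : desc a b = [] := by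
  simp [desc, Nat.sub_eq_zero_of_le h]

theorem mem_desc {a b x : ℕ} (h : x ∈ desc a b) : b ≤ x ∧ x ≤ a := by
  simp only [desc, List.mem_map, List.mem_range] at h
  obtain ⟨t, ht, rfl⟩ := h
  omega

theorem desc_cons {a b : ℕ} (hb : 1 ≤ b) (h : b ≤ a) : desc a b = a :: desc (a - 1) b := by
  unfold desc
  have h1 : a + 1 - b = (a - b) + 1 := by omega
  have h2 : a - 1 + 1 - b = a - b := by omega
  rw [h1, h2, List.range_succ_eq_map, List.map_cons, List.map_map]
  simp only [Nat.sub_zero]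
  congr 1
  apply List.map_congr_left
  intro t _
  simp only [Function.comp_apply, Nat.succ_eq_add_one]
  omega

theorem desc_split {b : ℕ} (hb : 1 ≤ b) :
    ∀ (c : ℕ) (x m : List ℕ) (a : ℕ), desc c b = x ++ a :: m →
      b ≤ a ∧ a ≤ c ∧ x = desc c (a + 1) ∧ m = desc (a - 1) b := by
  intro c
  induction c with
  | zero =>
    intro x m a h
    rw [desc_nil (by omega)] at h
    simp at h
  | succ c ih =>
    intro x m a h
    by_cases hbc : b ≤ c + 1
    · rw [desc_cons hb hbc] at h
      simp only [Nat.add_sub_cancel] at h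
      cases x with
      | nil =>
        simp only [List.nil_append, List.cons.injEq] at h
        obtain ⟨rfl, rfl⟩ := h
        exact ⟨hbc, le_refl _, by rw [desc_nil (by omega)], rfl⟩
      | cons x0 x' =>
        simp only [List.cons_append, List.cons.injEq] at h
        obtain ⟨rfl, h2⟩ := h
        obtain ⟨h3, h4, h5, h6⟩ := ih x' m a h2
        refine ⟨h3, by omega, ?_, h6⟩
        rw [desc_cons (by omega) (by omega), Nat.add_sub_cancel, h5]
    · rw [desc_nil (by omega)] at h
      simp at h

theorem desc_decomp {b a : ℕ} (hb : 1 ≤ b) (hba : b ≤ a) :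
    ∀ c, a ≤ c → desc c b = desc c (a + 1) ++ a :: desc (a - 1) b := by
  intro c
  induction c with
  | zero => intro h; omega
  | succ c ih =>
    intro hac
    have h1 : c + 1 - 1 = c := by omega
    rcases eq_or_lt_of_le hac with heq | h
    · subst heq
      rw [desc_cons hb hba, show desc (c + 1) (c + 1 + 1) = [] from desc_nil (by omega)]
      simp
    · rw [desc_cons hb (by omega), h1, ih (by omega),
        desc_cons (by omega : 1 ≤ a + 1) (by omega : a + 1 ≤ c + 1), h1]
      simp

theorem split_of_not_mem {α : Type*} {a : α} :
    ∀ (p : List α) {w x m : List α}, p ++ w = x ++ a :: m → a ∉ p →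
      ∃ x', x = p ++ x' ∧ w = x' ++ a :: m := by
  intro p
  induction p with
  | nil => intro w x m h _; exact ⟨x, rfl, h⟩
  | cons h0 p' ih =>
    intro w x m h hna
    cases x with
    | nil =>
      simp only [List.cons_append, List.nil_append, List.cons.injEq] at h
      exact absurd (h.1 ▸ List.mem_cons_self) hna
    | cons x0 x' =>
      simp only [List.cons_append, List.cons.injEq] at h
      obtain ⟨rfl, h2⟩ := h
      obtain ⟨x'', hx, hw⟩ := ih h2 (fun hm => hna (List.mem_cons_of_mem _ hm))
      exact ⟨x'', by rw [hx]; rfl, hw⟩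

theorem head_vals (n : ℕ) (b : Bool) :
    (if b = true then n else n - 1) = n ∨ (if b = true then n else n - 1) = n - 1 := by
  cases b <;> simp

theorem suffixWord_cons (n : ℕ) (c : Bool) (k : ℕ) (ks : List ℕ) :
    suffixWord n c (k :: ks) = ((if c then n else n - 1) :: desc (n - 2) k) ++ suffixWord n (!c) ks :=
  rfl

/-- The first letter of a nonempty suffix word is the head determined by the parity. -/
theorem head_suffixWord {n : ℕ} {ks : List ℕ} {c : Bool} {a : ℕ} {z : List ℕ}
    (h : suffixWord n c ks = a :: z) : a = (if c then n else n - 1) := by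
  cases ks with
  | nil => simp [suffixWord] at h
  | cons k ks =>
    rw [suffixWord_cons] at h
    simp only [List.cons_append, List.cons.injEq] at h
    exact h.1.symm

theorem not_mem_suffixWord {n a : ℕ} (hn : 4 ≤ n) (ha : a ≤ n - 2) :
    ∀ (ks : List ℕ) (c : Bool), (∀ k ∈ ks, a < k) → a ∉ suffixWord n c ks := by
  intro ks
  induction ks with
  | nil => intro c _; simp [suffixWord]
  | cons k ks ih =>
    intro c hk
    rw [suffixWord_cons]
    simp only [List.cons_append, List.mem_cons, List.mem_append, not_or]
    refine ⟨?_, ?_, ih (!c) (fun k' hk' => hk k' (List.mem_cons_of_mem _ hk'))⟩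
    · have := hk k (List.mem_cons_self)
      cases c <;> simp <;> omega
    · intro hmem
      have := mem_desc hmem
      have := hk k (List.mem_cons_self)
      omega

/-- The letter immediately preceding any occurrence of a letter `a ≤ n-2` in a suffix word
is adjacent to `a`. -/
theorem pred_adj {n : ℕ} (hn : 4 ≤ n) {a : ℕ} (ha1 : 1 ≤ a) (ha2 : a ≤ n - 2) :
    ∀ (ks : List ℕ) (c : Bool) (y z : List ℕ),
      (∀ k ∈ ks, 1 ≤ k) →
      suffixWord n c ks = y ++ a :: z →
      ∃ p e, y = p ++ [e] ∧ dnAdj n a e := by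
  intro ks
  induction ks with
  | nil => intro c y z _ h; simp [suffixWord] at h
  | cons k ks ih =>
    intro c y z hk h
    rw [suffixWord_cons] at h
    have hk1 : 1 ≤ k := hk k (List.mem_cons_self)
    cases y with
    | nil =>
      simp only [List.cons_append, List.nil_append, List.cons.injEq] at h
      have h1 := h.1
      rcases head_vals n c with hv | hv <;> omega
    | cons y0 y' =>
      simp only [List.cons_append, List.cons.injEq] at h
      obtain ⟨rfl, h2⟩ := h
      rcases List.append_eq_append_iff.mp h2 with ⟨t, ht1, ht2⟩ | ⟨t, ht1, ht2⟩
      · -- y' = desc ++ t, rest = t ++ a :: z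
        obtain ⟨p, e, rfl, hadj⟩ := ih (!c) t z (fun k' hk' => hk k' (List.mem_cons_of_mem _ hk')) ht2
        exact ⟨(if c then n else n - 1) :: desc (n - 2) k ++ p, e, by rw [ht1]; simp, hadj⟩
      · -- desc = y' ++ t, a :: z = t ++ rest
        cases t with
        | nil =>
          simp only [List.nil_append] at ht2
          have h3 := head_suffixWord ht2.symm
          rcases head_vals n (!c) with hv | hv <;> omega
        | cons t0 t' =>
          simp only [List.cons_append, List.cons.injEq] at ht2
          obtain ⟨rfl, rfl⟩ := ht2
          obtain ⟨hka, han2, hy', _⟩ := desc_split hk1 (n - 2) y' t' a ht1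
          rcases eq_or_lt_of_le han2 with heq | hlt
          · -- a = n - 2
            subst heq
            rw [show desc (n - 2) (n - 2 + 1) = [] from desc_nil (by omega)] at hy'
            subst hy'
            refine ⟨[], _, rfl, ?_⟩
            cases c
            · have he : (if (false : Bool) = true then n else n - 1) = n - 1 := by simp
              rw [he]; left; constructor <;> omega
            · have he : (if (true : Bool) = true then n else n - 1) = n := by simp
              rw [he]; right; right; right; exact ⟨rfl, rfl⟩
          · -- a < n - 2, last of y' is a + 1
            rw [desc_decomp (by omega : 1 ≤ a + 1) (le_refl (a + 1)) (n - 2) (by omega),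
              show desc (a + 1 - 1) (a + 1) = [] from desc_nil (by omega)] at hy'
            subst hy'
            refine ⟨(if c then n else n - 1) :: desc (n - 2) (a + 1 + 1), a + 1, by simp, ?_⟩
            left; constructor <;> omega

/-- The two possible heads differ. -/
theorem head_ne {n : ℕ} (hn : 4 ≤ n) (c : Bool) {a : ℕ}
    (h1 : a = (if c then n else n - 1)) (h2 : a = (if !c then n else n - 1)) : False := by
  cases c <;> simp at h1 h2 <;> omega

/-- If the head letter `a ∈ {n, n-1}` occurs in a suffix word (not at a position-0 head),
then the part `y` before it contains an `n - 2`. -/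
theorem head_gap {n : ℕ} (hn : 4 ≤ n) {a : ℕ} (ha : a = n ∨ a = n - 1) :
    ∀ (ks : List ℕ) (c : Bool) (y z : List ℕ),
      ks.Chain' (· < ·) → (∀ k ∈ ks, 1 ≤ k ∧ k ≤ n - 1) →
      suffixWord n c ks = y ++ a :: z →
      (a = (if c then n else n - 1) → y ≠ []) →
      ∃ p q, y = p ++ (n - 2) :: q := by
  intro ks
  induction ks with
  | nil => intro c y z _ _ h _; simp [suffixWord] at h
  | cons k ks ih =>
    intro c y z hch hb h hne
    rw [suffixWord_cons] at h
    have hk1 : 1 ≤ k := (hb k (List.mem_cons_self)).1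
    by_cases hac : a = (if c then n else n - 1)
    · -- a is this segment's head parity; y is nonempty
      cases y with
      | nil => exact absurd rfl (hne hac)
      | cons y0 y' =>
        simp only [List.cons_append, List.cons.injEq] at h
        obtain ⟨rfl, h2⟩ := h
        rcases List.append_eq_append_iff.mp h2 with ⟨t, ht1, ht2⟩ | ⟨t, ht1, ht2⟩
        · -- y' = desc ++ t, rest = t ++ a :: z
          obtain ⟨p, q, rfl⟩ := ih (!c) t z hch.tail
            (fun k' hk' => hb k' (List.mem_cons_of_mem _ hk')) ht2
            (fun hc => absurd (head_ne hn c hac hc) (fun f => f))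
          exact ⟨(if c then n else n - 1) :: desc (n - 2) k ++ p, q, by rw [ht1]; simp⟩
        · -- desc = y' ++ t
          cases t with
          | nil =>
            simp only [List.nil_append] at ht2
            exact absurd (head_ne hn c hac (head_suffixWord ht2.symm)) (fun f => f)
          | cons t0 t' =>
            simp only [List.cons_append, List.cons.injEq] at ht2
            obtain ⟨rfl, rfl⟩ := ht2
            obtain ⟨_, han2, _, _⟩ := desc_split hk1 (n - 2) y' t' a ht1
            exfalso
            rcases ha with rfl | rfl <;> omega
    · -- a is the other head; skip the whole first segment
      have hnm : a ∉ (if c then n else n - 1) :: desc (n - 2) k := by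
        intro hm
        rcases List.mem_cons.mp hm with hm | hm
        · exact hac hm
        · have := mem_desc hm
          rcases ha with rfl | rfl <;> omega
      obtain ⟨y₂, rfl, h3⟩ := split_of_not_mem _ h hnm
      cases y₂ with
      | nil =>
        -- a is at the start of the rest; the first segment's desc contains n - 2
        have hks : ks ≠ [] := by
          intro hk
          rw [hk] at h3
          simp [suffixWord] at h3
        obtain ⟨k', ks', rfl⟩ := List.exists_cons_of_ne_nil hks
        have hkk' : k < k' := (List.isChain_cons_cons.mp hch).1
        have hk'b : k' ≤ n - 1 := (hb k' (by simp)).2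
        have hkn2 : k ≤ n - 2 := by omega
        refine ⟨[(if c then n else n - 1)], desc (n - 3) k ++ [], ?_⟩
        rw [desc_cons hk1 hkn2]
        simp [show n - 2 - 1 = n - 3 by omega]
      | cons y20 y2' =>
        obtain ⟨p, q, heq⟩ := ih (!c) (y20 :: y2') z hch.tail
          (fun k' hk' => hb k' (List.mem_cons_of_mem _ hk')) h3 (fun _ => by simp)
        exact ⟨(if c then n else n - 1) :: desc (n - 2) k ++ p, q, by rw [heq]; simp⟩

/-- Between any two occurrences of the same letter in a suffix word, there are two letters
adjacent to it. -/
theorem main_split {n : ℕ} (hn : 4 ≤ n) :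
    ∀ (ks : List ℕ) (c : Bool) (x y z : List ℕ) (a : ℕ),
      ks.Chain' (· < ·) → (∀ k ∈ ks, 1 ≤ k ∧ k ≤ n - 1) →
      suffixWord n c ks = x ++ a :: (y ++ a :: z) →
      ∃ p b q e r, y = p ++ b :: (q ++ e :: r) ∧ dnAdj n a b ∧ dnAdj n a e := by
  intro ks
  induction ks with
  | nil => intro c x y z a _ _ h; simp [suffixWord] at h
  | cons k ks ih =>
    intro c x y z a hch hb h
    rw [suffixWord_cons] at h
    have hk1 : 1 ≤ k := (hb k (List.mem_cons_self)).1
    cases x with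
    | nil =>
      -- first occurrence is the head of the first segment
      simp only [List.cons_append, List.nil_append, List.cons.injEq] at h
      obtain ⟨ha, h2⟩ := h
      -- a = head, a ∈ {n, n-1}
      have han : a = n ∨ a = n - 1 := by
        cases c <;> simp at ha <;> omega
      have hnm : a ∉ desc (n - 2) k := by
        intro hm
        have := mem_desc hm
        rcases han with rfl | rfl <;> omega
      obtain ⟨y₂, rfl, h3⟩ := split_of_not_mem _ h2 hnm
      -- rest is nonempty, so ks = k' :: ks' and k ≤ n - 2
      have hks : ks ≠ [] := by
        intro hk
        rw [hk] at h3
        simp [suffixWord] at h3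
      obtain ⟨k', ks', rfl⟩ := List.exists_cons_of_ne_nil hks
      have hkk' : k < k' := (List.isChain_cons_cons.mp hch).1
      have hk'b : k' ≤ n - 1 := (hb k' (by simp)).2
      have hkn2 : k ≤ n - 2 := by omega
      -- the second n-2 comes from head_gap
      obtain ⟨p, q, hy₂⟩ := head_gap hn han (k' :: ks') (!c) y₂ z hch.tail
        (fun k'' hk'' => hb k'' (List.mem_cons_of_mem _ hk'')) h3
        (fun hc => absurd (head_ne hn c (ha ▸ rfl) hc) (fun f => f))
      refine ⟨[], n - 2, desc (n - 3) k ++ p, n - 2, q, ?_, ?_, ?_⟩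
      · rw [hy₂, desc_cons hk1 hkn2]
        simp [show n - 2 - 1 = n - 3 by omega]
      · rcases han with rfl | rfl
        · right; right; left; exact ⟨rfl, rfl⟩
        · right; left; constructor <;> omega
      · rcases han with rfl | rfl
        · right; right; left; exact ⟨rfl, rfl⟩
        · right; left; constructor <;> omega
    | cons x0 x₁ =>
      simp only [List.cons_append, List.cons.injEq] at h
      obtain ⟨rfl, h2⟩ := h
      rcases List.append_eq_append_iff.mp h2 with ⟨t, ht1, ht2⟩ | ⟨t, ht1, ht2⟩
      · -- x₁ = desc ++ t : both occurrences in the rest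
        exact ih (!c) t y z a hch.tail (fun k' hk' => hb k' (List.mem_cons_of_mem _ hk')) ht2
      · -- desc = x₁ ++ t
        cases t with
        | nil =>
          simp only [List.nil_append] at ht2
          exact ih (!c) [] y z a hch.tail (fun k' hk' => hb k' (List.mem_cons_of_mem _ hk'))
            (by simpa using ht2.symm)
        | cons t0 t' =>
          simp only [List.cons_append, List.cons.injEq] at ht2
          obtain ⟨rfl, hyz⟩ := ht2
          obtain ⟨hka, han2, _, hm⟩ := desc_split hk1 (n - 2) x₁ t' a ht1
          subst hm
          have ha1 : 1 ≤ a := by omega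
          -- a not in desc (a-1) k
          have hnm : a ∉ desc (a - 1) k := by
            intro hmem
            have := mem_desc hmem
            omega
          obtain ⟨y₂, rfl, h3⟩ := split_of_not_mem _ hyz.symm hnm
          rcases eq_or_lt_of_le hka with heq | hlt
          · -- k = a : a cannot reoccur
            exfalso
            have hall : ∀ k' ∈ ks, a < k' := by
              intro k' hk'
              have := (List.pairwise_cons.mp (List.isChain_iff_pairwise.mp hch)).1 k' hk'
              omega
            have := not_mem_suffixWord hn han2 ks (!c) hall
            rw [h3] at this
            simp at this
          · -- k < a : y starts with a - 1, and the rest gives an adjacent letter e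
            obtain ⟨p, e, hp, hadj⟩ := pred_adj hn ha1 han2 ks (!c) y₂ z
              (fun k' hk' => (hb k' (List.mem_cons_of_mem _ hk')).1) h3
            refine ⟨[], a - 1, desc (a - 2) k ++ p, e, [], ?_, ?_, hadj⟩
            · rw [hp, desc_cons hk1 (by omega : k ≤ a - 1)]
              simp [show a - 1 - 1 = a - 2 by omega]
            · right; left; constructor <;> omega

theorem getElem_split {α : Type*} {w l m : List α} {b : α} (h : w = l ++ b :: m)
    (hl : l.length < w.length) : w[l.length] = b := by
  subst h
  rw [List.getElem_append_right (le_refl _)]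
  simp

theorem getElem_split' {α : Type*} {w l m : List α} {b : α} (h : w = l ++ b :: m) {i : ℕ}
    (hi : i = l.length) (hl : i < w.length) : w[i] = b := by
  subst hi
  exact getElem_split h hl

theorem homog_of_splits {n : ℕ} {w : List ℕ}
    (H : ∀ x y z a, w = x ++ a :: (y ++ a :: z) →
      ∃ p b q e r, y = p ++ b :: (q ++ e :: r) ∧ dnAdj n a b ∧ dnAdj n a e) :
    Homog (dnAdj n) w := by
  intro r s hrs heq
  have hr : (r : ℕ) < w.length := r.2
  have hs : (s : ℕ) < w.length := s.2
  set a := w.get r with ha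
  have has : w[(s : ℕ)] = a := by
    rw [heq]
    simp [List.get_eq_getElem]
  -- split w at positions r and s
  have hd1 : w.drop (s : ℕ) = a :: w.drop ((s : ℕ) + 1) := by
    rw [List.drop_eq_getElem_cons hs, has]
  have hd2 : w.drop ((r : ℕ) + 1) =
      (w.drop ((r : ℕ) + 1)).take ((s : ℕ) - (r : ℕ) - 1) ++ (a :: w.drop ((s : ℕ) + 1)) := by
    conv_lhs => rw [← List.take_append_drop ((s : ℕ) - (r : ℕ) - 1) (w.drop ((r : ℕ) + 1))]
    rw [List.drop_drop, show (r : ℕ) + 1 + ((s : ℕ) - (r : ℕ) - 1) = (s : ℕ) by omega, hd1]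
  have h1 : w = w.take (r : ℕ) ++ a :: ((w.drop ((r : ℕ) + 1)).take ((s : ℕ) - (r : ℕ) - 1)
      ++ a :: w.drop ((s : ℕ) + 1)) := by
    have h0 : w = w.take (r : ℕ) ++ a :: w.drop ((r : ℕ) + 1) := by
      conv_lhs => rw [← List.take_append_drop (r : ℕ) w]
      rw [List.drop_eq_getElem_cons hr]
      rw [show w[(r : ℕ)] = a from by rw [ha, List.get_eq_getElem]]
    exact h0.trans (congrArg (fun l => w.take (r : ℕ) ++ a :: l) hd2)
  obtain ⟨p, b, q, e, r', hy, hb, he⟩ := H _ _ _ _ h1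
  have hxlen : (w.take (r : ℕ)).length = (r : ℕ) := by
    rw [List.length_take]; omega
  have hylen : ((w.drop ((r : ℕ) + 1)).take ((s : ℕ) - (r : ℕ) - 1)).length
      = (s : ℕ) - (r : ℕ) - 1 := by
    rw [List.length_take, List.length_drop]; omega
  -- rewrite w exposing b at position r + 1 + p.length
  have h2 : w = (w.take (r : ℕ) ++ a :: p) ++ b :: (q ++ e :: (r' ++ a :: w.drop ((s : ℕ) + 1))) :=
    h1.trans (by rw [hy]; simp)
  have h3 : w = ((w.take (r : ℕ) ++ a :: p) ++ b :: q) ++ e :: (r' ++ a :: w.drop ((s : ℕ) + 1)) :=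
    h2.trans (by simp)
  have hyl : p.length + 1 + q.length + 1 + r'.length = (s : ℕ) - (r : ℕ) - 1 := by
    have := congrArg List.length hy
    simp at this
    omega
  have hlt : (r : ℕ) + 1 + p.length < w.length := by
    have := congrArg List.length h2
    simp [hxlen] at this
    omega
  have hlu : (r : ℕ) + 1 + p.length + 1 + q.length < w.length := by
    have := congrArg List.length h3
    simp [hxlen] at this
    omega
  refine ⟨⟨(r : ℕ) + 1 + p.length, hlt⟩, ⟨(r : ℕ) + 1 + p.length + 1 + q.length, hlu⟩,
    (by show (r : ℕ) < (r : ℕ) + 1 + p.length; omega),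
    (by show (r : ℕ) + 1 + p.length < (r : ℕ) + 1 + p.length + 1 + q.length; omega),
    (by show (r : ℕ) + 1 + p.length + 1 + q.length < (s : ℕ); omega), ?_, ?_⟩
  · have hget : w[(r : ℕ) + 1 + p.length] = b := by
      refine getElem_split' h2 ?_ hlt
      simp only [List.length_append, List.length_cons, hxlen]
      omega
    simpa [List.get_eq_getElem, hget] using hb
  · have hget : w[(r : ℕ) + 1 + p.length + 1 + q.length] = e := by
      refine getElem_split' h3 ?_ hlu
      simp only [List.length_append, List.length_cons, hxlen]
      omega
    simpa [List.get_eq_getElem, hget] using he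


/-- Every suffix of type `Dₙ` is a homogeneous word. -/
theorem suffix_homogeneous (n : ℕ) (hn : 4 ≤ n) (js : List ℕ) (hjs : ValidSuffixIdx n js) :
    Homog (dnAdj n) (suffixWord n true js) := by
  obtain ⟨hchain, hbound⟩ := hjs
  apply homog_of_splits
  intro x y z a h
  exact main_split hn js true x y z a hchain hbound h
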